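/- Let (y_i)_{i=1}^n be points in ℝ^d, each lying in an assigned set T_i ⊆ ℝ^d with diam(T_i) ≤ R, and let G be the simple graph on {1,…,n} joining distinct i and j whenever T_i = T_j or T_i ∩ T_j ≠ ∅. Suppose {1,…,n} is partitioned into nonempty clusters C₁ and C₂ with min_{i ∈ C₁, j ∈ C₂} ‖y_i − y_j‖ > 2R, and the subgraphs induced on C₁ and on C₂ are each connected. Then the kernel of the graph Laplacian matrix L = D − A of G (where A is the 0/1 adjacency matrix and D the diagonal degree matrix) is two-dimensional; equivalently, G has exactly two connected components. -/

import Mathlib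

open scoped Classical

/-- Under the two-cluster Delaunay separation hypotheses, the kernel of the
graph Laplacian `L = D − A` of the Delaunay adjacency graph `G` is two-dimensional;
equivalently, `G` has exactly two connected components. -/
theorem kds_delaunay_laplacian_kernel_dim_two
    {d n : ℕ} (y : Fin n → EuclideanSpace ℝ (Fin d))
    (T : Fin n → Set (EuclideanSpace ℝ (Fin d))) (R : ℝ)
    (hyT : ∀ i, y i ∈ T i)
    (hdiam : ∀ i, ∀ u ∈ T i, ∀ v ∈ T i, dist u v ≤ R)
    (G : SimpleGraph (Fin n))
    (hG : ∀ i j, G.Adj i j ↔ i ≠ j ∧ (T i = T j ∨ (T i ∩ T j).Nonempty))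
    (C₁ C₂ : Set (Fin n)) (hC₁ : C₁.Nonempty) (hC₂ : C₂.Nonempty)
    (hdisj : Disjoint C₁ C₂) (hcover : C₁ ∪ C₂ = Set.univ)
    (hconn₁ : (G.induce C₁).Connected) (hconn₂ : (G.induce C₂).Connected)
    (hΔ : ∀ i ∈ C₁, ∀ j ∈ C₂, 2 * R < dist (y i) (y j))
    (A : Matrix (Fin n) (Fin n) ℝ)
    (hA : ∀ i j, A i j = if G.Adj i j then 1 else 0)
    (D : Matrix (Fin n) (Fin n) ℝ)
    (hD : D = Matrix.diagonal fun i => ∑ j, A i j) :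
    Module.finrank ℝ (LinearMap.ker (Matrix.toLin' (D - A))) = 2 ∧
      Nat.card G.ConnectedComponent = 2 := by
  classical
  -- No edges between the clusters.
  have hsep : ∀ i ∈ C₁, ∀ j ∈ C₂, ¬ G.Adj i j := by
    intro i hi j hj hadj
    rcases (hG i j).1 hadj with ⟨hne, hTT | ⟨x, hxi, hxj⟩⟩
    · have h1 : dist (y i) (y j) ≤ R := hdiam i (y i) (hyT i) (y j) (hTT ▸ hyT j)
      have h2 := hΔ i hi j hj
      have hR : 0 ≤ R := le_trans dist_nonneg h1
      linarith
    · have h1 : dist (y i) x ≤ R := hdiam i (y i) (hyT i) x hxi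
      have h2 : dist x (y j) ≤ R := hdiam j x hxj (y j) (hyT j)
      have h3 := hΔ i hi j hj
      have := dist_triangle (y i) x (y j)
      linarith
  -- Adjacency preserves clusters.
  have hadjC : ∀ i j, G.Adj i j → (i ∈ C₁ ↔ j ∈ C₁) := by
    intro i j hadj
    have hmem : ∀ k : Fin n, k ∈ C₁ ∨ k ∈ C₂ := by
      intro k
      have : k ∈ C₁ ∪ C₂ := hcover ▸ Set.mem_univ k
      exact this
    constructor
    · intro hi
      rcases hmem j with hj | hj
      · exact hj
      · exact absurd hadj (hsep i hi j hj)
    · intro hj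
      rcases hmem i with hi | hi
      · exact hi
      · exact absurd hadj.symm (hsep j hj i hi)
  have hreachC : ∀ i j, G.Reachable i j → (i ∈ C₁ ↔ j ∈ C₁) := by
    intro i j ⟨w⟩
    induction w with
    | nil => rfl
    | cons h _ ih => exact (hadjC _ _ h).trans ih
  -- Points within a cluster are reachable.
  have hreach₁ : ∀ i ∈ C₁, ∀ j ∈ C₁, G.Reachable i j := by
    intro i hi j hj
    have := hconn₁ ⟨i, hi⟩ ⟨j, hj⟩
    exact this.map (SimpleGraph.Embedding.induce C₁).toHom
  have hreach₂ : ∀ i ∈ C₂, ∀ j ∈ C₂, G.Reachable i j := by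
    intro i hi j hj
    have := hconn₂ ⟨i, hi⟩ ⟨j, hj⟩
    exact this.map (SimpleGraph.Embedding.induce C₂).toHom
  obtain ⟨a, ha⟩ := hC₁
  obtain ⟨b, hb⟩ := hC₂
  have hmem : ∀ k : Fin n, k ∈ C₁ ∨ k ∈ C₂ := by
    intro k
    have : k ∈ C₁ ∪ C₂ := hcover ▸ Set.mem_univ k
    exact this
  have hbn1 : b ∉ C₁ := fun h => hdisj.ne_of_mem h hb rfl
  -- Exactly two components.
  have hcard : Nat.card G.ConnectedComponent = 2 := by
    rw [Nat.card_eq_two_iff]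
    refine ⟨G.connectedComponentMk a, G.connectedComponentMk b, ?_, ?_⟩
    · intro h
      have := hreachC a b ((SimpleGraph.ConnectedComponent.eq).1 h)
      exact hbn1 (this.1 ha)
    · ext c
      simp only [Set.mem_insert_iff, Set.mem_singleton_iff, Set.mem_univ, iff_true]
      obtain ⟨k, rfl⟩ := c.exists_rep
      rcases hmem k with hk | hk
      · exact Or.inl (SimpleGraph.ConnectedComponent.eq.2 (hreach₁ k hk a ha))
      · exact Or.inr (SimpleGraph.ConnectedComponent.eq.2 (hreach₂ k hk b hb))
  -- Identify `D - A` with the Laplacian.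
  have hDA : D - A = G.lapMatrix ℝ := by
    ext i j
    have hAadj : A = G.adjMatrix ℝ := by
      ext i j
      rw [hA]
      simp [SimpleGraph.adjMatrix]
    have hdeg : (∑ j, A i j) = (G.degree i : ℝ) := by
      simp only [hA]
      rw [SimpleGraph.degree, SimpleGraph.neighborFinset]
      simp [Finset.sum_boole, Set.mem_toFinset, SimpleGraph.mem_neighborSet]
    rw [SimpleGraph.lapMatrix, hD]
    simp only [Matrix.sub_apply, SimpleGraph.degMatrix, Matrix.diagonal_apply]
    rw [hAadj]
    split_ifs with h
    · subst h; rw [← hAadj, hdeg]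
    · simp
  rw [hDA]
  refine ⟨?_, hcard⟩
  rw [← SimpleGraph.card_connectedComponent_eq_finrank_ker_toLin'_lapMatrix, ← Nat.card_eq_fintype_card]
  exact hcard
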